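/- (Modified Vitali covering lemma) Let 0 < ε < 1 and let C ⊂ D ⊂ B₁ ⊂ ℝⁿ be measurable sets with |C| < ε|B₁|, such that for every x ∈ B₁ and every r > 0, if |C ∩ B_r(x)| ≥ ε|B_r| then B_r(x) ∩ B₁ ⊂ D. Then |C| ≤ 10ⁿ ε |D|. -/
import Mathlib


open MeasureTheory Metric ENNReal Filter Topology Set

section aux

variable {n : ℕ}

private lemma stmt9_vol_ball (x : EuclideanSpace ℝ (Fin n)) {r : ℝ} (hr : 0 < r) :
    volume (ball x r)
      = ENNReal.ofReal (r ^ n) * volume (ball (0 : EuclideanSpace ℝ (Fin n)) 1) := by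
  rw [Measure.addHaar_ball_of_pos volume x hr, finrank_euclideanSpace, Fintype.card_fin]

private lemma stmt9_vol_cb (x : EuclideanSpace ℝ (Fin n)) {r : ℝ} (hr : 0 < r) :
    volume (closedBall x r) = volume (ball x r) := by
  rw [Measure.addHaar_closedBall volume x hr.le, Measure.addHaar_ball_of_pos volume x hr]

private lemma stmt9_cap_cb (A : Set (EuclideanSpace ℝ (Fin n))) (x : EuclideanSpace ℝ (Fin n))
    {r : ℝ} (hr : 0 < r) :
    volume (A ∩ closedBall x r) ≤ volume (A ∩ ball x r) := by
  have hsub : A ∩ closedBall x r ⊆ (A ∩ ball x r) ∪ sphere x r := by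
    rintro z ⟨hzA, hz⟩
    rcases lt_or_eq_of_le (mem_closedBall.1 hz) with h | h
    · exact Or.inl ⟨hzA, mem_ball.2 h⟩
    · exact Or.inr h
  calc volume (A ∩ closedBall x r) ≤ volume ((A ∩ ball x r) ∪ sphere x r) := measure_mono hsub
    _ ≤ volume (A ∩ ball x r) + volume (sphere x r) := measure_union_le _ _
    _ = volume (A ∩ ball x r) := by
        rw [Measure.addHaar_sphere_of_ne_zero volume x hr.ne', add_zero]

/-- If `x ∈ B₁` and `0 < r ≤ 2` then `B_r(x) ∩ B₁` contains a ball of radius `r/2`. -/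
private lemma stmt9_inner (x : EuclideanSpace ℝ (Fin n))
    (hx : x ∈ ball (0 : EuclideanSpace ℝ (Fin n)) 1) {r : ℝ} (hr0 : 0 < r) (hr2 : r ≤ 2) :
    volume (ball x r)
      ≤ (2 : ℝ≥0∞) ^ n * volume (ball x r ∩ ball (0 : EuclideanSpace ℝ (Fin n)) 1) := by
  have hx1 : ‖x‖ < 1 := by simpa [mem_ball, dist_zero_right] using hx
  obtain ⟨y, hy⟩ : ∃ y : EuclideanSpace ℝ (Fin n),
      ball y (r / 2) ⊆ ball x r ∩ ball (0 : EuclideanSpace ℝ (Fin n)) 1 := by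
    by_cases h : ‖x‖ ≤ 1 - r / 2
    · refine ⟨x, fun z hz => ⟨ball_subset_ball (by linarith) hz, ?_⟩⟩
      have hz' : dist z x < r / 2 := mem_ball.1 hz
      have h3 : dist z (0 : EuclideanSpace ℝ (Fin n)) ≤ dist z x + dist x 0 := dist_triangle _ _ _
      rw [dist_zero_right] at h3
      simp only [mem_ball, dist_zero_right]
      have hdx : dist x (0 : EuclideanSpace ℝ (Fin n)) = ‖x‖ := dist_zero_right x
      rw [hdx] at h3
      linarith
    · push_neg at h
      have hx0 : 0 < ‖x‖ := lt_of_le_of_lt (by linarith) h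
      set c : ℝ := (1 - r / 2) / ‖x‖ with hc
      have hc0 : 0 ≤ c := div_nonneg (by linarith) hx0.le
      refine ⟨c • x, fun z hz => ?_⟩
      have hyx : dist (c • x) x < r / 2 := by
        have : c • x - x = (c - 1) • x := by rw [sub_smul, one_smul]
        rw [dist_eq_norm, this, norm_smul, Real.norm_eq_abs]
        have hc1 : c ≤ 1 := by
          rw [hc, div_le_one hx0]; linarith
        rw [abs_of_nonpos (by linarith), neg_sub, sub_mul, one_mul, hc,
          div_mul_cancel₀ _ hx0.ne']
        linarith
      have hynorm : ‖c • x‖ = 1 - r / 2 := by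
        rw [norm_smul, Real.norm_eq_abs, abs_of_nonneg hc0, hc, div_mul_cancel₀ _ hx0.ne']
      have hz' : dist z (c • x) < r / 2 := mem_ball.1 hz
      constructor
      · have : dist z x ≤ dist z (c • x) + dist (c • x) x := dist_triangle _ _ _
        exact mem_ball.2 (by linarith)
      · have h2 : dist z (0 : EuclideanSpace ℝ (Fin n)) ≤ dist z (c • x) + dist (c • x) 0 :=
          dist_triangle _ _ _
        rw [dist_zero_right] at h2
        have hdy : dist (c • x) (0 : EuclideanSpace ℝ (Fin n)) = ‖c • x‖ := dist_zero_right _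
        rw [hdy, hynorm] at h2
        simp only [mem_ball, dist_zero_right]
        linarith
  have h1 : volume (ball y (r / 2))
      = ENNReal.ofReal ((r / 2) ^ n) * volume (ball (0 : EuclideanSpace ℝ (Fin n)) 1) :=
    stmt9_vol_ball y (by linarith)
  have h2 : volume (ball x r)
      = ENNReal.ofReal (r ^ n) * volume (ball (0 : EuclideanSpace ℝ (Fin n)) 1) :=
    stmt9_vol_ball x hr0
  have key : volume (ball x r) = (2 : ℝ≥0∞) ^ n * volume (ball y (r / 2)) := by
    rw [h1, h2, ← mul_assoc]
    congr 1
    rw [show (2 : ℝ≥0∞) ^ n = ENNReal.ofReal ((2 : ℝ) ^ n) by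
      rw [ENNReal.ofReal_pow (by norm_num)]; norm_num]
    rw [← ENNReal.ofReal_mul (by positivity)]
    congr 1
    rw [← mul_pow]
    congr 1
    ring
  rw [key]
  exact mul_le_mul_right (measure_mono hy) _

end aux

/-- Modified Vitali covering lemma: if `C ⊆ D ⊆ B₁`, `|C| < ε|B₁|`
and whenever `|C ∩ B_r(x)| ≥ ε|B_r(x)|` for `x ∈ B₁` one has `B_r(x) ∩ B₁ ⊆ D`,
then `|C| ≤ 10ⁿ ε |D|`. -/
theorem stmt_9 (n : ℕ) (ε : ℝ) (hε0 : 0 < ε) (hε1 : ε < 1)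
    (C D : Set (EuclideanSpace ℝ (Fin n)))
    (hCmeas : MeasurableSet C) (hDmeas : MeasurableSet D)
    (hCD : C ⊆ D) (hD : D ⊆ ball (0 : EuclideanSpace ℝ (Fin n)) 1)
    (hCsmall : volume C < ENNReal.ofReal ε * volume (ball (0 : EuclideanSpace ℝ (Fin n)) 1))
    (hprop : ∀ x ∈ ball (0 : EuclideanSpace ℝ (Fin n)) 1, ∀ r > (0:ℝ),
      ENNReal.ofReal ε * volume (ball x r) ≤ volume (C ∩ ball x r) →
      ball x r ∩ ball (0 : EuclideanSpace ℝ (Fin n)) 1 ⊆ D) :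
    volume C ≤ (10:ℝ≥0∞) ^ n * ENNReal.ofReal ε * volume D := by
  classical
  have hCB : C ⊆ ball (0 : EuclideanSpace ℝ (Fin n)) 1 := hCD.trans hD
  have κlt : volume (ball (0 : EuclideanSpace ℝ (Fin n)) 1) < ⊤ := measure_ball_lt_top
  -- the set of "good" radii at a point
  set S : EuclideanSpace ℝ (Fin n) → Set ℝ := fun x =>
    {r : ℝ | 0 < r ∧ r ≤ 2 ∧ ENNReal.ofReal ε * volume (ball x r) ≤ volume (C ∩ ball x r)}
    with hS
  -- density points
  set T : Set (EuclideanSpace ℝ (Fin n)) := {x | Tendsto (fun r => volume (C ∩ closedBall x r) / volume (closedBall x r))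
      (𝓝[>] 0) (𝓝 (C.indicator 1 x))} with hT
  have hdens : ∀ᵐ x : EuclideanSpace ℝ (Fin n) ∂volume, x ∈ T :=
    Besicovitch.ae_tendsto_measure_inter_div_of_measurableSet volume hCmeas
  set C' : Set (EuclideanSpace ℝ (Fin n)) := C ∩ T with hC'
  have hC'C : C' ⊆ C := inter_subset_left
  have hnull : volume (C \ C') = 0 := by
    have : C \ C' ⊆ {x | ¬ x ∈ T} := fun x hx => fun hxT => hx.2 ⟨hx.1, hxT⟩
    exact measure_mono_null this hdens
  -- each density point has a good radius
  have hSne : ∀ x ∈ C', (S x).Nonempty := by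
    intro x hx
    have hxT : Tendsto (fun r => volume (C ∩ closedBall x r) / volume (closedBall x r))
        (𝓝[>] 0) (𝓝 1) := by
      have := hx.2
      rwa [hT, mem_setOf_eq, indicator_of_mem hx.1, Pi.one_apply] at this
    have hεlt : ENNReal.ofReal ε < 1 := ENNReal.ofReal_lt_one.2 hε1
    have h1 : ∀ᶠ r in 𝓝[>] (0:ℝ),
        ENNReal.ofReal ε < volume (C ∩ closedBall x r) / volume (closedBall x r) :=
      hxT.eventually_const_lt hεlt
    have h2 : ∀ᶠ r in 𝓝[>] (0:ℝ), r ∈ Ioo (0:ℝ) 2 :=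
      Ioo_mem_nhdsGT_of_mem ⟨le_rfl, by norm_num⟩
    obtain ⟨r, hr1, hr2⟩ := (h1.and h2).exists
    refine ⟨r, hr2.1, hr2.2.le, ?_⟩
    have hcb0 : volume (closedBall x r) ≠ 0 :=
      (measure_closedBall_pos volume x hr2.1).ne'
    have hcbt : volume (closedBall x r) ≠ ⊤ := measure_closedBall_lt_top.ne
    have hmul : ENNReal.ofReal ε * volume (closedBall x r) ≤ volume (C ∩ closedBall x r) :=
      (ENNReal.le_div_iff_mul_le (Or.inl hcb0) (Or.inl hcbt)).1 hr1.le
    calc ENNReal.ofReal ε * volume (ball x r)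
        ≤ ENNReal.ofReal ε * volume (closedBall x r) :=
          mul_le_mul_right (measure_mono ball_subset_closedBall) _
      _ ≤ volume (C ∩ closedBall x r) := hmul
      _ ≤ volume (C ∩ ball x r) := stmt9_cap_cb C x hr2.1
  have hSbdd : ∀ x : EuclideanSpace ℝ (Fin n), BddAbove (S x) := fun x => ⟨2, fun r hr => hr.2.1⟩
  -- the maximal good radius
  set ρ : EuclideanSpace ℝ (Fin n) → ℝ := fun x => sSup (S x) with hρ
  have hρpos : ∀ x ∈ C', 0 < ρ x := by
    intro x hx
    obtain ⟨r, hr⟩ := hSne x hx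
    exact lt_of_lt_of_le hr.1 (le_csSup (hSbdd x) hr)
  have hρle2 : ∀ x ∈ C', ρ x ≤ 2 := by
    intro x hx
    exact csSup_le (hSne x hx) fun r hr => hr.2.1
  have hρmem : ∀ x ∈ C', ρ x ∈ S x := by
    intro x hx
    refine ⟨hρpos x hx, hρle2 x hx, ?_⟩
    -- approximate sSup from below
    have hex : ∀ k : ℕ, ∃ r ∈ S x, ρ x - 1 / (k + 1) < r := by
      intro k
      exact exists_lt_of_lt_csSup (hSne x hx)
        (sub_lt_self _ (by positivity))
    choose f hfS hflt using hex
    have hfle : ∀ k, f k ≤ ρ x := fun k => le_csSup (hSbdd x) (hfS k)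
    have htend : Tendsto f atTop (𝓝 (ρ x)) := by
      have hlow : Tendsto (fun k : ℕ => ρ x - 1 / (k + 1 : ℝ)) atTop (𝓝 (ρ x)) := by
        have h := Tendsto.sub
          (tendsto_const_nhds : Tendsto (fun _ : ℕ => ρ x) atTop (𝓝 (ρ x)))
          tendsto_one_div_add_atTop_nhds_zero_nat
        simpa using h
      exact tendsto_of_tendsto_of_tendsto_of_le_of_le hlow tendsto_const_nhds
        (fun k => (hflt k).le) hfle
    have hvol : Tendsto (fun k => ENNReal.ofReal (ε * f k ^ n) * volume (ball (0 : EuclideanSpace ℝ (Fin n)) 1))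
        atTop (𝓝 (ENNReal.ofReal (ε * ρ x ^ n) * volume (ball (0 : EuclideanSpace ℝ (Fin n)) 1))) := by
      refine ENNReal.Tendsto.mul_const ?_ (Or.inr κlt.ne)
      exact ENNReal.tendsto_ofReal ((tendsto_const_nhds.mul (htend.pow n)))
    have hbound : ∀ k : ℕ, ENNReal.ofReal (ε * f k ^ n) * volume (ball (0 : EuclideanSpace ℝ (Fin n)) 1)
        ≤ volume (C ∩ ball x (ρ x)) := by
      intro k
      have h1 : ENNReal.ofReal (ε * f k ^ n) * volume (ball (0 : EuclideanSpace ℝ (Fin n)) 1)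
          = ENNReal.ofReal ε * volume (ball x (f k)) := by
        rw [stmt9_vol_ball x (hfS k).1, ENNReal.ofReal_mul hε0.le, mul_assoc]
      rw [h1]
      exact le_trans (hfS k).2.2
        (measure_mono (inter_subset_inter_right _ (ball_subset_ball (hfle k))))
    have hlim := le_of_tendsto hvol (Eventually.of_forall hbound)
    calc ENNReal.ofReal ε * volume (ball x (ρ x))
        = ENNReal.ofReal (ε * ρ x ^ n) * volume (ball (0 : EuclideanSpace ℝ (Fin n)) 1) := by
          rw [stmt9_vol_ball x (hρpos x hx), ENNReal.ofReal_mul hε0.le, mul_assoc]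
      _ ≤ volume (C ∩ ball x (ρ x)) := hlim
  -- beyond the maximal radius the density is below ε
  have hupper : ∀ x ∈ C', ∀ r : ℝ, ρ x < r →
      volume (C ∩ ball x r) ≤ ENNReal.ofReal ε * volume (ball x r) := by
    intro x hx r hr
    have hr0 : 0 < r := lt_trans (hρpos x hx) hr
    rcases le_or_gt r 2 with h2 | h2
    · have hnot : r ∉ S x := fun hmem => absurd (le_csSup (hSbdd x) hmem) (not_le.2 hr)
      rw [hS, mem_setOf_eq] at hnot
      push_neg at hnot
      exact (hnot hr0 h2).le
    · have hsub : C ⊆ ball x r := by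
        intro z hz
        have hz1 : ‖z‖ < 1 := by simpa [mem_ball, dist_zero_right] using hCB hz
        have hx1 : ‖x‖ < 1 := by
          simpa [mem_ball, dist_zero_right] using hCB (hC'C hx)
        have : dist z x ≤ ‖z‖ + ‖x‖ := dist_le_norm_add_norm z x
        exact mem_ball.2 (by linarith)
      have hr1 : (1:ℝ) ≤ r := by linarith
      have hκ : volume (ball (0 : EuclideanSpace ℝ (Fin n)) 1) ≤ volume (ball x r) := by
        rw [stmt9_vol_ball x hr0]
        calc volume (ball (0 : EuclideanSpace ℝ (Fin n)) 1) = 1 * volume (ball (0 : EuclideanSpace ℝ (Fin n)) 1) := (one_mul _).symm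
          _ ≤ ENNReal.ofReal (r ^ n) * volume (ball (0 : EuclideanSpace ℝ (Fin n)) 1) := by
              refine mul_le_mul_left ?_ _
              rw [show (1 : ℝ≥0∞) = ENNReal.ofReal 1 by simp]
              exact ENNReal.ofReal_le_ofReal (one_le_pow₀ hr1)
      calc volume (C ∩ ball x r) ≤ volume C := measure_mono inter_subset_left
        _ ≤ ENNReal.ofReal ε * volume (ball (0 : EuclideanSpace ℝ (Fin n)) 1) := hCsmall.le
        _ ≤ ENNReal.ofReal ε * volume (ball x r) := mul_le_mul_right hκ _
  -- Vitali covering lemma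
  obtain ⟨u, huC', hdisj, hcov⟩ :=
    Vitali.exists_disjoint_subfamily_covering_enlargement_closedBall C' (id : EuclideanSpace ℝ (Fin n) → EuclideanSpace ℝ (Fin n)) ρ 2
      (fun a ha => hρle2 a ha) 5 (by norm_num)
  simp only [id] at hdisj hcov
  have hucount : u.Countable := by
    refine hdisj.countable_of_nonempty_interior fun b hb => ?_
    exact ⟨b, ball_subset_interior_closedBall (mem_ball_self (hρpos b (huC' hb)))⟩
  have hC'cov : C' ⊆ ⋃ b ∈ u, closedBall b (5 * ρ b) := by
    intro a ha
    obtain ⟨b, hb, hsub⟩ := hcov a ha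
    exact mem_biUnion hb (hsub (mem_closedBall_self (hρpos a ha).le))
  -- per-ball estimate
  have hball : ∀ b ∈ u, volume (C ∩ closedBall b (5 * ρ b))
      ≤ (10:ℝ≥0∞) ^ n * ENNReal.ofReal ε * volume (ball b (ρ b) ∩ ball (0 : EuclideanSpace ℝ (Fin n)) 1) := by
    intro b hb
    have hbC' : b ∈ C' := huC' hb
    have hr : 0 < ρ b := hρpos b hbC'
    have h5r : 0 < 5 * ρ b := by linarith
    have hbB1 : b ∈ ball (0 : EuclideanSpace ℝ (Fin n)) 1 := hCB (hC'C hbC')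
    calc volume (C ∩ closedBall b (5 * ρ b))
        ≤ volume (C ∩ ball b (5 * ρ b)) := stmt9_cap_cb C b h5r
      _ ≤ ENNReal.ofReal ε * volume (ball b (5 * ρ b)) :=
          hupper b hbC' _ (by linarith)
      _ = ENNReal.ofReal ε * ((5:ℝ≥0∞) ^ n * volume (ball b (ρ b))) := by
          rw [stmt9_vol_ball b h5r, stmt9_vol_ball b hr]
          congr 1
          rw [mul_pow, ENNReal.ofReal_mul (by positivity), ← mul_assoc]
          congr 1
          rw [ENNReal.ofReal_pow (by norm_num)]
          norm_num
      _ ≤ ENNReal.ofReal ε * ((5:ℝ≥0∞) ^ n *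
            ((2:ℝ≥0∞) ^ n * volume (ball b (ρ b) ∩ ball (0 : EuclideanSpace ℝ (Fin n)) 1))) := by
          exact mul_le_mul_right (mul_le_mul_right
            (stmt9_inner b hbB1 hr (hρle2 b hbC')) _) _
      _ = (10:ℝ≥0∞) ^ n * ENNReal.ofReal ε * volume (ball b (ρ b) ∩ ball (0 : EuclideanSpace ℝ (Fin n)) 1) := by
          rw [show (10:ℝ≥0∞) ^ n = (5:ℝ≥0∞) ^ n * (2:ℝ≥0∞) ^ n by
            rw [← mul_pow]; norm_num]
          ring
  -- the disjoint pieces sit inside D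
  have hED : ∀ b ∈ u, ball b (ρ b) ∩ ball (0 : EuclideanSpace ℝ (Fin n)) 1 ⊆ D := by
    intro b hb
    have hbC' : b ∈ C' := huC' hb
    exact hprop b (hCB (hC'C hbC')) (ρ b) (hρpos b hbC') (hρmem b hbC').2.2
  have hEdisj : u.PairwiseDisjoint fun b => ball b (ρ b) ∩ ball (0 : EuclideanSpace ℝ (Fin n)) 1 :=
    hdisj.mono fun b => (inter_subset_left).trans ball_subset_closedBall
  have hsum : ∑' b : u, volume (ball (b:EuclideanSpace ℝ (Fin n)) (ρ b) ∩ ball (0 : EuclideanSpace ℝ (Fin n)) 1) ≤ volume D := by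
    rw [← measure_biUnion hucount hEdisj
      (fun b _ => measurableSet_ball.inter measurableSet_ball)]
    exact measure_mono (iUnion₂_subset fun b hb => hED b hb)
  -- put everything together
  calc volume C ≤ volume C' + volume (C \ C') := by
        refine le_trans (measure_mono ?_) (measure_union_le _ _)
        intro z hz
        by_cases h : z ∈ C'
        · exact Or.inl h
        · exact Or.inr ⟨hz, h⟩
    _ = volume C' := by rw [hnull, add_zero]
    _ ≤ volume (⋃ b ∈ u, C ∩ closedBall b (5 * ρ b)) := by
        refine measure_mono fun z hz => ?_
        obtain ⟨_, ⟨b, rfl⟩, _, ⟨hb, rfl⟩, hzb⟩ := hC'cov hz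
        exact mem_biUnion hb ⟨hC'C hz, hzb⟩
    _ ≤ ∑' b : u, volume (C ∩ closedBall (b : EuclideanSpace ℝ (Fin n)) (5 * ρ b)) :=
        measure_biUnion_le volume hucount _
    _ ≤ ∑' b : u, (10:ℝ≥0∞) ^ n * ENNReal.ofReal ε
          * volume (ball (b:EuclideanSpace ℝ (Fin n)) (ρ b) ∩ ball (0 : EuclideanSpace ℝ (Fin n)) 1) :=
        ENNReal.tsum_le_tsum fun b => hball b b.2
    _ = (10:ℝ≥0∞) ^ n * ENNReal.ofReal ε
          * ∑' b : u, volume (ball (b:EuclideanSpace ℝ (Fin n)) (ρ b) ∩ ball (0 : EuclideanSpace ℝ (Fin n)) 1) :=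
        ENNReal.tsum_mul_left
    _ ≤ (10:ℝ≥0∞) ^ n * ENNReal.ofReal ε * volume D := mul_le_mul_right hsum _
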